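/- Let (P,Q) be a monomial cover of a finite group G acting transitively on X and Y. Then the invariant space 𝒜_{P,Q}(X,Y) has a basis of μ_n⁺-valued matrices B₁,…,B_r whose supports are exactly the orientable G-orbits O₁,…,O_r in X×Y; in particular dim_ℂ 𝒜_{P,Q}(X,Y) equals the number of orientable orbits. -/

import Mathlib

open Matrix

private theorem root_conj14 (n : ℕ) (hn : 0 < n) (d : ℂ) (h : d ^ n = 1) :
    d * (starRingEnd ℂ) d = 1 := by
  have h1 : ‖d‖ ^ n = 1 := by rw [← norm_pow, h]; simp
  have h2 : ‖d‖ = 1 := by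
    have := (pow_left_inj₀ (norm_nonneg d) zero_le_one hn.ne').mp (by simpa using h1)
    simpa using this
  have h3 : Complex.normSq d = 1 := by
    have : ‖d‖ = 1 := h2
    rw [← Complex.sq_norm, this]; norm_num
  rw [Complex.mul_conj, h3]; norm_cast

/-- For a monomial cover `(P, Q)` of a group `G` acting transitively on `X`
and `Y`, the invariant space `𝒜_{P,Q}(X,Y)` has a basis of μ_n⁺-valued matrices indexed by
the orientable `G`-orbits in `X × Y`, where the matrix attached to an orientable orbit is
supported exactly on that orbit; in particular the dimension equals the number of
orientable orbits. -/
theorem stmt_14 {G X Y : Type*} [Group G] [Fintype G] [Fintype X] [Fintype Y]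
    [DecidableEq X] [DecidableEq Y] [MulAction G X] [MulAction G Y]
    [MulAction.IsPretransitive G X] [MulAction.IsPretransitive G Y]
    (n : ℕ) (hn : 0 < n)
    (P : G → Matrix X X ℂ) (Q : G → Matrix Y Y ℂ)
    (hPmul : ∀ a b : G, P (a * b) = P a * P b) (hQmul : ∀ a b : G, Q (a * b) = Q a * Q b)
    (hP : ∀ g : G, ∃ d : X → ℂ, (∀ x, (d x) ^ n = 1) ∧
        ∀ i j, P g i j = if i = g • j then d j else 0)
    (hQ : ∀ g : G, ∃ d : Y → ℂ, (∀ y, (d y) ^ n = 1) ∧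
        ∀ i j, Q g i j = if i = g • j then d j else 0) :
    ∃ B : {ω : Quotient (MulAction.orbitRel G (X × Y)) //
        ∀ p : X × Y, Quotient.mk (MulAction.orbitRel G (X × Y)) p = ω →
          ∀ g : G, g • p.1 = p.1 → g • p.2 = p.2 → P g p.1 p.1 = Q g p.2 p.2} →
          Matrix X Y ℂ,
      (∀ ω, ∀ g : G, P g * B ω * (Q g)ᴴ = B ω) ∧
      (∀ ω (p : X × Y), Quotient.mk (MulAction.orbitRel G (X × Y)) p = ω.1 →
          (B ω p.1 p.2) ^ n = 1) ∧
      (∀ ω (p : X × Y), Quotient.mk (MulAction.orbitRel G (X × Y)) p ≠ ω.1 →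
          B ω p.1 p.2 = 0) ∧
      LinearIndependent ℂ B ∧
      (∀ M : Matrix X Y ℂ, (∀ g : G, P g * M * (Q g)ᴴ = M) →
          M ∈ Submodule.span ℂ (Set.range B)) := by
  classical
  choose dP hdPn hdPe using hP
  choose dQ hdQn hdQe using hQ
  set S := MulAction.orbitRel G (X × Y) with hS
  -- the cocycle
  let c : G → X × Y → ℂ := fun g p => dP g p.1 * (starRingEnd ℂ) (dQ g p.2)
  have hcval : ∀ g p, c g p = dP g p.1 * (starRingEnd ℂ) (dQ g p.2) := fun _ _ => rfl
  have hcn : ∀ g p, (c g p) ^ n = 1 := by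
    intro g p
    rw [hcval, mul_pow, ← map_pow, hdPn, hdQn, _root_.map_one, mul_one]
  have hc0 : ∀ g p, c g p ≠ 0 := by
    intro g p h
    have := hcn g p
    rw [h, zero_pow hn.ne'] at this
    exact zero_ne_one this
  -- multiplicativity of the diagonal factors
  have hdPmul : ∀ (g h : G) (j : X), dP (g * h) j = dP g (h • j) * dP h j := by
    intro g h j
    have hE : P (g * h) ((g * h) • j) j = (P g * P h) ((g * h) • j) j := by
      rw [hPmul]
    simpa [hdPe, Matrix.mul_apply, mul_smul, ite_mul, mul_ite, zero_mul, mul_zero,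
      Finset.sum_ite_eq, smul_left_cancel_iff] using hE
  have hdQmul : ∀ (g h : G) (j : Y), dQ (g * h) j = dQ g (h • j) * dQ h j := by
    intro g h j
    have hE : Q (g * h) ((g * h) • j) j = (Q g * Q h) ((g * h) • j) j := by
      rw [hQmul]
    simpa [hdQe, Matrix.mul_apply, mul_smul, ite_mul, mul_ite, zero_mul, mul_zero,
      Finset.sum_ite_eq, smul_left_cancel_iff] using hE
  have hcoc : ∀ (g h : G) (p : X × Y), c (g * h) p = c g (h • p) * c h p := by
    intro g h p
    simp only [hcval, hdPmul, hdQmul, _root_.map_mul, Prod.smul_fst, Prod.smul_snd]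
    ring
  -- orientation criterion
  have horient : ∀ (g : G) (x : X) (y : Y), g • x = x → g • y = y →
      (P g x x = Q g y y ↔ c g (x, y) = 1) := by
    intro g x y hx hy
    have hPe : P g x x = dP g x := by rw [hdPe, if_pos (by rw [hx])]
    have hQe : Q g y y = dQ g y := by rw [hdQe, if_pos (by rw [hy])]
    rw [hPe, hQe, hcval]
    constructor
    · intro h
      rw [h]
      exact root_conj14 n hn _ (hdQn g y)
    · intro h
      have h2 : dQ g y * (starRingEnd ℂ) (dQ g y) = 1 := root_conj14 n hn _ (hdQn g y)
      have : dP g x * ((starRingEnd ℂ) (dQ g y) * dQ g y) = dQ g y := by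
        rw [← mul_assoc, h, one_mul]
      rwa [mul_comm ((starRingEnd ℂ) (dQ g y)), h2, mul_one] at this
  -- key entry computation
  have hkey : ∀ (g : G) (M : Matrix X Y ℂ) (x : X) (y : Y),
      (P g * M * (Q g)ᴴ) (g • x) (g • y) = c g (x, y) * M x y := by
    intro g M x y
    simp only [Matrix.mul_apply, Matrix.conjTranspose_apply, hdPe, hdQe,
      smul_left_cancel_iff, hcval, Complex.star_def, apply_ite (starRingEnd ℂ), map_zero,
      ite_mul, mul_ite, zero_mul, mul_zero, Finset.sum_ite_eq, Finset.mem_univ, if_true]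
    ring
  -- invariance characterization
  have hiff : ∀ M : Matrix X Y ℂ, (∀ g : G, P g * M * (Q g)ᴴ = M) ↔
      ∀ (g : G) (x : X) (y : Y), M (g • x) (g • y) = c g (x, y) * M x y := by
    intro M
    constructor
    · intro h g x y
      conv_lhs => rw [← h g]
      exact hkey g M x y
    · intro h g
      ext x y
      have h1 := hkey g M (g⁻¹ • x) (g⁻¹ • y)
      have h2 := h g (g⁻¹ • x) (g⁻¹ • y)
      rw [smul_inv_smul, smul_inv_smul] at h1 h2
      rw [h1, ← h2]
  -- orbit membership
  have hmk : ∀ p q : X × Y, Quotient.mk S p = Quotient.mk S q ↔ ∃ g : G, g • q = p := by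
    intro p q
    rw [Quotient.eq]
    exact MulAction.orbitRel_apply.trans MulAction.mem_orbit_iff
  -- the index type
  set ι := {ω : Quotient S //
      ∀ p : X × Y, Quotient.mk S p = ω →
        ∀ g : G, g • p.1 = p.1 → g • p.2 = p.2 → P g p.1 p.1 = Q g p.2 p.2} with hι
  let pt : ι → X × Y := fun ω => ω.1.out
  have hout : ∀ ω : ι, Quotient.mk S (pt ω) = ω.1 := fun ω => Quotient.out_eq _
  -- fixed points of orientable orbits have trivial cocycle
  have hfix : ∀ (ω : ι) (g : G), g • pt ω = pt ω → c g (pt ω) = 1 := by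
    intro ω g hg
    have h1 : g • (pt ω).1 = (pt ω).1 := by
      have := congrArg Prod.fst hg; simpa using this
    have h2 : g • (pt ω).2 = (pt ω).2 := by
      have := congrArg Prod.snd hg; simpa using this
    exact (horient g _ _ h1 h2).mp (ω.2 (pt ω) (hout ω) g h1 h2)
  -- well-definedness
  have hwd : ∀ (ω : ι) (g g' : G), g • pt ω = g' • pt ω → c g (pt ω) = c g' (pt ω) := by
    intro ω g g' hgg
    have hst : (g'⁻¹ * g) • pt ω = pt ω := by
      rw [mul_smul, hgg, inv_smul_smul]
    have h1 : c (g' * (g'⁻¹ * g)) (pt ω) = c g' ((g'⁻¹ * g) • pt ω) * c (g'⁻¹ * g) (pt ω) :=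
      hcoc _ _ _
    rw [mul_inv_cancel_left, hst, hfix ω _ hst, mul_one] at h1
    exact h1
  -- the basis matrices
  let B : ι → Matrix X Y ℂ := fun ω x y =>
    if h : ∃ g : G, g • pt ω = (x, y) then c h.choose (pt ω) else 0
  have hBval : ∀ (ω : ι) (g : G), B ω (g • (pt ω).1) (g • (pt ω).2) = c g (pt ω) := by
    intro ω g
    have hex : ∃ g' : G, g' • pt ω = (g • (pt ω).1, g • (pt ω).2) :=
      ⟨g, by rw [Prod.smul_def]⟩
    have : B ω (g • (pt ω).1) (g • (pt ω).2) = c hex.choose (pt ω) := dif_pos hex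
    rw [this]
    exact hwd ω _ g (by rw [hex.choose_spec, Prod.smul_def])
  have hBzero : ∀ (ω : ι) (p : X × Y), Quotient.mk S p ≠ ω.1 → B ω p.1 p.2 = 0 := by
    intro ω p hp
    apply dif_neg
    rintro ⟨g, hg⟩
    exact hp (((hmk p (pt ω)).mpr ⟨g, hg⟩).trans (hout ω))
  have hBroot : ∀ (ω : ι) (p : X × Y), Quotient.mk S p = ω.1 → (B ω p.1 p.2) ^ n = 1 := by
    intro ω p hp
    obtain ⟨g, hg⟩ := (hmk p (pt ω)).mp (hp.trans (hout ω).symm)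
    have h1 : p.1 = g • (pt ω).1 := by rw [← hg]; simp
    have h2 : p.2 = g • (pt ω).2 := by rw [← hg]; simp
    rw [h1, h2, hBval]
    exact hcn g _
  -- invariance of B pointwise
  have hBinv : ∀ (ω : ι) (g : G) (x : X) (y : Y),
      B ω (g • x) (g • y) = c g (x, y) * B ω x y := by
    intro ω g x y
    by_cases h : ∃ g₀ : G, g₀ • pt ω = (x, y)
    · obtain ⟨g₀, h₀⟩ := h
      have hx : x = g₀ • (pt ω).1 := by simpa using (congrArg Prod.fst h₀).symm
      have hy : y = g₀ • (pt ω).2 := by simpa using (congrArg Prod.snd h₀).symm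
      subst hx; subst hy
      rw [← mul_smul, ← mul_smul, hBval, hBval, hcoc]
      congr 2
    · have h1 : B ω x y = 0 := by
        apply dif_neg; exact h
      have h2 : B ω (g • x) (g • y) = 0 := by
        apply dif_neg
        rintro ⟨g', hg'⟩
        exact h ⟨g⁻¹ * g', by rw [mul_smul, hg', Prod.smul_def]; simp⟩
      rw [h1, h2, mul_zero]
  refine ⟨B, ?_, hBroot, hBzero, ?_, ?_⟩
  · intro ω g
    exact (hiff (B ω)).mpr (fun g x y => hBinv ω g x y) g
  · -- linear independence
    rw [linearIndependent_iff']
    intro s f hsum i hi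
    have hBi : B i (pt i).1 (pt i).2 ≠ 0 := by
      intro h0
      have := hBroot i (pt i) (hout i)
      rw [h0, zero_pow hn.ne'] at this
      exact zero_ne_one this
    have heval := congrFun (congrFun hsum (pt i).1) (pt i).2
    rw [Matrix.sum_apply] at heval
    simp only [Matrix.smul_apply, smul_eq_mul] at heval
    rw [Finset.sum_eq_single i (fun j _ hj => by
      rw [hBzero j (pt i) (fun h => hj (Subtype.ext ((hout i).symm.trans h)).symm), mul_zero])
      (fun h => absurd hi h)] at heval
    have : f i * B i (pt i).1 (pt i).2 = 0 := heval
    exact (mul_eq_zero.mp this).resolve_right hBi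
  · -- spanning
    intro M hM
    have hM' := (hiff M).mp hM
    haveI : Fintype ι := Fintype.ofFinite ι
    have hvan : ∀ p : X × Y,
        (¬ ∀ p' : X × Y, Quotient.mk S p' = Quotient.mk S p →
          ∀ g : G, g • p'.1 = p'.1 → g • p'.2 = p'.2 → P g p'.1 p'.1 = Q g p'.2 p'.2) →
        M p.1 p.2 = 0 := by
      intro p hnor
      push_neg at hnor
      obtain ⟨p', hp', g, hg1, hg2, hne⟩ := hnor
      have hc1 : c g p' ≠ 1 := fun h => hne ((horient g _ _ hg1 hg2).mpr h)
      have hMp' : M p'.1 p'.2 = 0 := by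
        have := hM' g p'.1 p'.2
        rw [hg1, hg2] at this
        have h2 : (c g (p'.1, p'.2) - 1) * M p'.1 p'.2 = 0 := by
          rw [sub_mul, one_mul, ← this, sub_self]
        rcases mul_eq_zero.mp h2 with h | h
        · exact absurd (by linear_combination h) hc1
        · exact h
      obtain ⟨g₁, hg₁⟩ := (hmk p' p).mp hp'
      have h1 : p'.1 = g₁ • p.1 := by rw [← hg₁]; simp
      have h2 : p'.2 = g₁ • p.2 := by rw [← hg₁]; simp
      rw [h1, h2, hM'] at hMp'
      exact (mul_eq_zero.mp hMp').resolve_left (hc0 g₁ _)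
    have hrepr : M = ∑ ω : ι, M (pt ω).1 (pt ω).2 • B ω := by
      ext x y
      rw [Matrix.sum_apply]
      simp only [Matrix.smul_apply, smul_eq_mul]
      by_cases horb : ∀ p' : X × Y, Quotient.mk S p' = Quotient.mk S (x, y) →
          ∀ g : G, g • p'.1 = p'.1 → g • p'.2 = p'.2 → P g p'.1 p'.1 = Q g p'.2 p'.2
      · set ω₀ : ι := ⟨Quotient.mk S (x, y), horb⟩ with hω₀
        rw [Finset.sum_eq_single ω₀ (fun j _ hj => by
          rw [hBzero j (x, y) (fun h => hj (Subtype.ext h.symm)), mul_zero])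
          (fun h => absurd (Finset.mem_univ ω₀) h)]
        obtain ⟨g, hg⟩ := (hmk (x, y) (pt ω₀)).mp (hout ω₀).symm
        have h1 : x = g • (pt ω₀).1 := by simpa using (congrArg Prod.fst hg).symm
        have h2 : y = g • (pt ω₀).2 := by simpa using (congrArg Prod.snd hg).symm
        rw [h1, h2, hBval, hM']
        ring
      · rw [Finset.sum_eq_zero (fun ω _ => by
          rw [hBzero ω (x, y) (fun h => horb (h ▸ ω.2)), mul_zero])]
        exact hvan (x, y) horb
    rw [hrepr]
    exact Submodule.sum_mem _ (fun ω _ =>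
      Submodule.smul_mem _ _ (Submodule.subset_span ⟨ω, rfl⟩))
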